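/- Let x : [0,T] → ℝ^n be a C¹ solution of x'(t) = A x(t) + B u(t) + Σ_{i=1}^m N_i x(t) u_i(t) with x(0) = 0, and suppose P₂ is symmetric positive definite satisfying Aᵀ P₂⁻¹ + P₂⁻¹ A + Σ_{i=1}^m N_iᵀ P₂⁻¹ N_i ≤ −P₂⁻¹ B Bᵀ P₂⁻¹. Then (without any bound on u) for all t ∈ [0,T], x(t)ᵀ P₂⁻¹ x(t) ≤ (∫₀ᵗ ‖u(s)‖₂² ds) · exp(∫₀ᵗ ‖u(s)‖₂² ds). -/

import Mathlib

open Matrix BigOperators MeasureTheory intervalIntegral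

lemma sum_mulVec' {n k : ℕ} (M : Fin k → Matrix (Fin n) (Fin n) ℝ) (v : Fin n → ℝ) :
    (∑ i, M i) *ᵥ v = ∑ i, M i *ᵥ v := by
  ext j
  simp [Matrix.mulVec, dotProduct, Finset.sum_apply, Matrix.sum_apply, Finset.sum_mul]
  rw [Finset.sum_comm]

lemma mulVec_sum' {n k : ℕ} (P : Matrix (Fin n) (Fin n) ℝ) (f : Fin k → Fin n → ℝ) :
    P *ᵥ (∑ i, f i) = ∑ i, P *ᵥ f i := by
  ext j
  simp [Matrix.mulVec, dotProduct, Finset.sum_apply, Finset.mul_sum]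
  rw [Finset.sum_comm]

lemma dotProduct_sum' {n k : ℕ} (v : Fin n → ℝ) (f : Fin k → Fin n → ℝ) :
    v ⬝ᵥ (∑ i, f i) = ∑ i, v ⬝ᵥ f i := by
  simp [dotProduct, Finset.sum_apply, Finset.mul_sum]
  rw [Finset.sum_comm]

lemma key_ineq {n m : ℕ} (A : Matrix (Fin n) (Fin n) ℝ) (B : Matrix (Fin n) (Fin m) ℝ)
    (N : Fin m → Matrix (Fin n) (Fin n) ℝ) (P : Matrix (Fin n) (Fin n) ℝ)
    (hP : P.PosDef) (hsym : Pᵀ = P)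
    (hL : ((-(P * B * Bᵀ * P)) - (Aᵀ * P + P * A + ∑ i, (N i)ᵀ * P * N i)).PosSemidef)
    (v : Fin n → ℝ) (w : Fin m → ℝ) :
    (A *ᵥ v + B *ᵥ w + ∑ i, w i • (N i *ᵥ v)) ⬝ᵥ P *ᵥ v
      + v ⬝ᵥ P *ᵥ (A *ᵥ v + B *ᵥ w + ∑ i, w i • (N i *ᵥ v))
      ≤ (∑ i, w i ^ 2) * (1 + v ⬝ᵥ P *ᵥ v) := by
  have hsd : ∀ a b : Fin n → ℝ, a ⬝ᵥ P *ᵥ b = b ⬝ᵥ P *ᵥ a := by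
    intro a b
    rw [dotProduct_mulVec, ← mulVec_transpose, hsym, dotProduct_comm]
  have hquad : ∀ a : Fin n → ℝ, 0 ≤ a ⬝ᵥ P *ᵥ a := by
    intro a; simpa using hP.posSemidef.dotProduct_mulVec_nonneg a
  have htr : ∀ (M : Matrix (Fin n) (Fin n) ℝ) (z : Fin n → ℝ),
      v ⬝ᵥ (Mᵀ *ᵥ z) = (M *ᵥ v) ⬝ᵥ z := by
    intro M z; rw [dotProduct_mulVec, vecMul_transpose]
  have hPB : ∀ z : Fin m → ℝ, v ⬝ᵥ P *ᵥ (B *ᵥ z) = (Bᵀ *ᵥ (P *ᵥ v)) ⬝ᵥ z := by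
    intro z
    rw [dotProduct_mulVec, ← mulVec_transpose, hsym, dotProduct_mulVec, ← mulVec_transpose]
  set a : Fin m → ℝ := Bᵀ *ᵥ (P *ᵥ v) with ha
  have hexp : v ⬝ᵥ P *ᵥ (A *ᵥ v + B *ᵥ w + ∑ i, w i • (N i *ᵥ v))
      = v ⬝ᵥ P *ᵥ (A *ᵥ v) + a ⬝ᵥ w + ∑ i, w i * (v ⬝ᵥ P *ᵥ (N i *ᵥ v)) := by
    rw [mulVec_add, mulVec_add, dotProduct_add, dotProduct_add, hPB, mulVec_sum', dotProduct_sum']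
    simp [mulVec_smul, dotProduct_smul, smul_eq_mul]
  have hNq : ∀ i, 2 * (w i * (v ⬝ᵥ P *ᵥ (N i *ᵥ v)))
      ≤ w i ^ 2 * (v ⬝ᵥ P *ᵥ v) + (N i *ᵥ v) ⬝ᵥ P *ᵥ (N i *ᵥ v) := by
    intro i
    have h0 := hquad (w i • v - N i *ᵥ v)
    have hcross : (N i *ᵥ v) ⬝ᵥ P *ᵥ v = v ⬝ᵥ P *ᵥ (N i *ᵥ v) := hsd _ _
    simp only [sub_dotProduct, dotProduct_sub, mulVec_sub, mulVec_smul, smul_dotProduct,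
      dotProduct_smul, smul_eq_mul] at h0
    rw [hcross] at h0
    have hring : w i ^ 2 * (v ⬝ᵥ P *ᵥ v) - 2 * (w i * (v ⬝ᵥ P *ᵥ (N i *ᵥ v)))
        + (N i *ᵥ v) ⬝ᵥ P *ᵥ (N i *ᵥ v)
        = w i * (w i * (v ⬝ᵥ P *ᵥ v) - v ⬝ᵥ P *ᵥ (N i *ᵥ v))
          - (w i * (v ⬝ᵥ P *ᵥ (N i *ᵥ v)) - (N i *ᵥ v) ⬝ᵥ P *ᵥ (N i *ᵥ v)) := by ring
    linarith [h0, hring.ge, hring.le]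
  have haa : a ⬝ᵥ a = v ⬝ᵥ (P * B * Bᵀ * P) *ᵥ v := by
    have h1 : (P * B * Bᵀ * P) *ᵥ v = P *ᵥ (B *ᵥ (Bᵀ *ᵥ (P *ᵥ v))) := by
      rw [mulVec_mulVec, mulVec_mulVec, mulVec_mulVec]
    rw [h1, hPB]
  have hBq : 2 * (a ⬝ᵥ w) ≤ a ⬝ᵥ a + ∑ i, w i ^ 2 := by
    have h0 : (0:ℝ) ≤ (a - w) ⬝ᵥ (a - w) := by
      simp only [dotProduct]
      exact Finset.sum_nonneg fun i _ => mul_self_nonneg _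
    have hww : w ⬝ᵥ w = ∑ i, w i ^ 2 := by simp [dotProduct, sq]
    simp only [sub_dotProduct, dotProduct_sub] at h0
    rw [dotProduct_comm w a] at h0
    linarith
  have hLv : v ⬝ᵥ P *ᵥ (A *ᵥ v) + v ⬝ᵥ P *ᵥ (A *ᵥ v) + ∑ i, (N i *ᵥ v) ⬝ᵥ P *ᵥ (N i *ᵥ v)
      ≤ - (a ⬝ᵥ a) := by
    have h0 : (0:ℝ) ≤ v ⬝ᵥ ((-(P * B * Bᵀ * P)) - (Aᵀ * P + P * A + ∑ i, (N i)ᵀ * P * N i)) *ᵥ v := by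
      simpa using hL.dotProduct_mulVec_nonneg v
    rw [sub_mulVec, neg_mulVec, add_mulVec, add_mulVec, sum_mulVec'] at h0
    simp only [dotProduct_sub, dotProduct_neg, dotProduct_add, dotProduct_sum'] at h0
    have hAv : v ⬝ᵥ (Aᵀ * P) *ᵥ v = v ⬝ᵥ P *ᵥ (A *ᵥ v) := by
      rw [← mulVec_mulVec, htr, ← hsd]
    have hPAv : v ⬝ᵥ (P * A) *ᵥ v = v ⬝ᵥ P *ᵥ (A *ᵥ v) := by
      rw [← mulVec_mulVec]
    have hNv : ∀ i, v ⬝ᵥ ((N i)ᵀ * P * N i) *ᵥ v = (N i *ᵥ v) ⬝ᵥ P *ᵥ (N i *ᵥ v) := by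
      intro i
      rw [← mulVec_mulVec, ← mulVec_mulVec, htr]
    rw [hAv, hPAv, ← haa] at h0
    simp only [hNv] at h0
    linarith
  have hNsum : 2 * ∑ i, w i * (v ⬝ᵥ P *ᵥ (N i *ᵥ v))
      ≤ (∑ i, w i ^ 2) * (v ⬝ᵥ P *ᵥ v) + ∑ i, (N i *ᵥ v) ⬝ᵥ P *ᵥ (N i *ᵥ v) := by
    rw [Finset.mul_sum, Finset.sum_mul, ← Finset.sum_add_distrib]
    exact Finset.sum_le_sum fun i _ => hNq i
  rw [hsd _ v, hexp]
  nlinarith [hNsum, hBq, hLv]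

lemma hasDerivAt_quadForm {n : ℕ} (P : Matrix (Fin n) (Fin n) ℝ) {x : ℝ → Fin n → ℝ}
    {x' : Fin n → ℝ} {t : ℝ} (hx : HasDerivAt x x' t) :
    HasDerivAt (fun s => x s ⬝ᵥ P *ᵥ x s) (x' ⬝ᵥ P *ᵥ x t + x t ⬝ᵥ P *ᵥ x') t := by
  have h1 : ∀ i, HasDerivAt (fun s => x s i) (x' i) t := fun i => hasDerivAt_pi.1 hx i
  have h2 : ∀ i, HasDerivAt (fun s => (P *ᵥ x s) i) ((P *ᵥ x') i) t := by
    intro i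
    simp only [Matrix.mulVec, dotProduct]
    exact HasDerivAt.fun_sum fun j _ => (h1 j).const_mul (P i j)
  have h3 := HasDerivAt.fun_sum (fun i (_ : i ∈ Finset.univ) => (h1 i).mul (h2 i))
  have e1 : (fun s => x s ⬝ᵥ P *ᵥ x s) = fun s => ∑ i, x s i * (P *ᵥ x s) i := by
    funext s; rfl
  have e2 : x' ⬝ᵥ P *ᵥ x t + x t ⬝ᵥ P *ᵥ x'
      = ∑ i, (x' i * (P *ᵥ x t) i + x t i * (P *ᵥ x') i) := by
    rw [Finset.sum_add_distrib]; rfl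
  rw [e1, e2]
  exact h3

theorem stmt_5 {n m : ℕ} (T : ℝ) (hT : 0 < T)
    (A : Matrix (Fin n) (Fin n) ℝ) (B : Matrix (Fin n) (Fin m) ℝ)
    (N : Fin m → Matrix (Fin n) (Fin n) ℝ)
    (P₂ : Matrix (Fin n) (Fin n) ℝ) (hP : P₂.PosDef)
    (hLyap : ((-(P₂⁻¹ * B * Bᵀ * P₂⁻¹)) -
        (Aᵀ * P₂⁻¹ + P₂⁻¹ * A + ∑ i, (N i)ᵀ * P₂⁻¹ * N i)).PosSemidef)
    (u : ℝ → Fin m → ℝ) (hu : Continuous u)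
    (x : ℝ → Fin n → ℝ)
    (hx0 : x 0 = 0)
    (hx : ∀ t ∈ Set.Icc (0 : ℝ) T,
      HasDerivAt x (A *ᵥ x t + B *ᵥ u t + ∑ i, u t i • (N i *ᵥ x t)) t) :
    ∀ t ∈ Set.Icc (0 : ℝ) T,
      x t ⬝ᵥ P₂⁻¹ *ᵥ x t ≤
        (∫ s in (0 : ℝ)..t, ∑ i, (u s i) ^ 2) *
          Real.exp (∫ s in (0 : ℝ)..t, ∑ i, (u s i) ^ 2) := by
  intro t ht
  have hsym : (P₂⁻¹)ᵀ = P₂⁻¹ := by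
    have h := hP.isHermitian.inv
    simpa [Matrix.IsHermitian] using h
  set g : ℝ → ℝ := fun s => ∑ i, (u s i) ^ 2 with hgdef
  have hg : Continuous g :=
    continuous_finset_sum _ fun i _ => ((continuous_apply i).comp hu).pow 2
  set W : ℝ → ℝ := fun r => ∫ s in (0:ℝ)..r, g s with hWdef
  have hW : ∀ r : ℝ, HasDerivAt W (g r) r := fun r =>
    (hg.integral_hasStrictDerivAt 0 r).hasDerivAt
  set V : ℝ → ℝ := fun s => x s ⬝ᵥ P₂⁻¹ *ᵥ x s with hVdef
  set F : ℝ → ℝ := fun s => (V s + 1) * Real.exp (-(W s)) with hFdef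
  have hF : ∀ r ∈ Set.Icc (0:ℝ) T, HasDerivAt F
      (((A *ᵥ x r + B *ᵥ u r + ∑ i, u r i • (N i *ᵥ x r)) ⬝ᵥ P₂⁻¹ *ᵥ x r
          + x r ⬝ᵥ P₂⁻¹ *ᵥ (A *ᵥ x r + B *ᵥ u r + ∑ i, u r i • (N i *ᵥ x r)))
          * Real.exp (-(W r))
        + (V r + 1) * (Real.exp (-(W r)) * (-(g r)))) r := by
    intro r hr
    exact ((hasDerivAt_quadForm P₂⁻¹ (hx r hr)).add_const 1).mul ((hW r).neg.exp)
  have hkey : ∀ r ∈ Set.Icc (0:ℝ) T,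
      ((A *ᵥ x r + B *ᵥ u r + ∑ i, u r i • (N i *ᵥ x r)) ⬝ᵥ P₂⁻¹ *ᵥ x r
        + x r ⬝ᵥ P₂⁻¹ *ᵥ (A *ᵥ x r + B *ᵥ u r + ∑ i, u r i • (N i *ᵥ x r)))
        ≤ g r * (1 + V r) := fun r _ =>
    key_ineq A B N P₂⁻¹ hP.inv hsym hLyap (x r) (u r)
  have hanti : AntitoneOn F (Set.Icc 0 T) := by
    apply antitoneOn_of_deriv_nonpos (convex_Icc 0 T)
    · exact fun r hr => ((hF r hr).continuousAt).continuousWithinAt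
    · intro r hr
      rw [interior_Icc] at hr
      exact ((hF r (Set.Ioo_subset_Icc_self hr)).differentiableAt).differentiableWithinAt
    · intro r hr
      rw [interior_Icc] at hr
      have hd := hF r (Set.Ioo_subset_Icc_self hr)
      rw [hd.deriv]
      have h2 := hkey r (Set.Ioo_subset_Icc_self hr)
      have hE := (Real.exp_pos (-(W r))).le
      nlinarith [mul_nonpos_of_nonpos_of_nonneg (sub_nonpos.2 h2) hE]
  have hF0 : F 0 = 1 := by
    simp [hFdef, hVdef, hWdef, hx0, intervalIntegral.integral_same]
  have hFt : F t ≤ 1 := by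
    rw [← hF0]
    exact hanti (Set.left_mem_Icc.2 hT.le) ht ht.1
  have hmul : Real.exp (-(W t)) * Real.exp (W t) = 1 := by
    rw [← Real.exp_add]; simp
  have h1 : V t + 1 ≤ Real.exp (W t) := by
    have h := mul_le_mul_of_nonneg_right hFt (Real.exp_pos (W t)).le
    rw [one_mul, mul_assoc, hmul, mul_one] at h
    exact h
  have h2 : Real.exp (W t) - 1 ≤ W t * Real.exp (W t) := by
    have h := mul_le_mul_of_nonneg_right (Real.add_one_le_exp (-(W t)))
      (Real.exp_pos (W t)).le
    rw [hmul] at h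
    nlinarith [h]
  show V t ≤ W t * Real.exp (W t)
  linarith
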